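/- Let A be a uniform space and let G be a group. Equip A^G with the product uniform structure and the shift action of G. If X ⊂ A^G is a strongly irreducible G-invariant subset, then the action of G on X (with the induced uniform structure) has the weak specification property. In particular, the full shift (A^G, G) has the weak specification property. -/

import Mathlib

open scoped Pointwise Uniformity

/-- The shift action of `G` on `A^G`, namely `(g • x)(h) = x (g⁻¹ h)`. -/
def shift {G A : Type*} [Group G] (g : G) (x : G → A) : G → A := fun h => x (g⁻¹ * h)

/-- A subset `X ⊆ A^G` is strongly irreducible if there is a finite `Δ ⊆ G` such that
configurations of `X` prescribed on finite sets `Ω₁, Ω₂` with `Ω₁ ∩ Ω₂Δ = ∅` can be glued. -/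
def StronglyIrreducible {G A : Type*} [Group G] (X : Set (G → A)) : Prop :=
  ∃ Δ : Finset G, ∀ Ω₁ Ω₂ : Finset G,
    Disjoint (Ω₁ : Set G) ((Ω₂ : Set G) * (Δ : Set G)) →
    ∀ x₁ ∈ X, ∀ x₂ ∈ X, ∃ x ∈ X, (∀ g ∈ Ω₁, x g = x₁ g) ∧ (∀ g ∈ Ω₂, x g = x₂ g)

/-- The weak specification property for a (not necessarily instance-given) action
`act : G → X → X` with respect to a uniformity filter `u` on `X × X`. -/
def WeakSpecificationOn {G X : Type*} [Group G] (u : Filter (X × X)) (act : G → X → X) : Prop :=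
  ∀ U ∈ u, ∃ Λ : Finset G,
    ∀ (ι : Type) (_ : Finite ι) (_ : Nonempty ι) (Ω : ι → Finset G) (x : ι → X),
      (∀ j k : ι, j ≠ k → Disjoint ((Ω j : Set G)) ((Λ : Set G) * (Ω k : Set G))) →
      ∃ y : X, ∀ i : ι, ∀ g ∈ Ω i, (act g y, act g (x i)) ∈ U

/-- Every entourage of the product uniformity contains a "equal on a finite set" entourage. -/
theorem pi_entourage {G A : Type*} [UniformSpace A] {V : Set ((G → A) × (G → A))}
    (hV : V ∈ 𝓤 (G → A)) :
    ∃ F : Finset G, ∀ y z : G → A, (∀ h ∈ F, y h = z h) → (y, z) ∈ V := by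
  rw [Pi.uniformity, Filter.mem_iInf'] at hV
  obtain ⟨I, hIfin, W, hW, hWuniv, hVeq, -⟩ := hV
  refine ⟨hIfin.toFinset, fun y z hyz => ?_⟩
  rw [hVeq]
  refine Set.mem_iInter₂.2 fun i hi => ?_
  obtain ⟨u, hu, husub⟩ := (Filter.mem_comap).1 (hW i)
  apply husub
  have : y i = z i := hyz i (hIfin.mem_toFinset.2 hi)
  simp only [Set.mem_preimage, this]
  exact refl_mem_uniformity hu

/-- Gluing finitely many configurations in a strongly irreducible set. -/
theorem glue_finset {G A : Type*} [Group G] {X : Set (G → A)} {Δ : Finset G}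
    (hirr : ∀ Ω₁ Ω₂ : Finset G,
      Disjoint (Ω₁ : Set G) ((Ω₂ : Set G) * (Δ : Set G)) →
      ∀ x₁ ∈ X, ∀ x₂ ∈ X, ∃ x ∈ X, (∀ g ∈ Ω₁, x g = x₁ g) ∧ (∀ g ∈ Ω₂, x g = x₂ g))
    {ι : Type} [DecidableEq ι] (s : Finset ι) (Ψ : ι → Finset G) (x : ι → G → A)
    (hx : ∀ i, x i ∈ X) (hX : X.Nonempty)
    (hdisj : ∀ j ∈ s, ∀ k ∈ s, j ≠ k → Disjoint ((Ψ j : Set G)) (((Ψ k) : Set G) * (Δ : Set G))) :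
    ∃ y ∈ X, ∀ i ∈ s, ∀ g ∈ Ψ i, y g = x i g := by
  classical
  induction s using Finset.induction_on with
  | empty => exact ⟨hX.choose, hX.choose_spec, by simp⟩
  | @insert a t ha ih =>
    obtain ⟨y0, hy0X, hy0⟩ := ih (fun j hj k hk hjk =>
      hdisj j (Finset.mem_insert_of_mem hj) k (Finset.mem_insert_of_mem hk) hjk)
    have hd : Disjoint ((Ψ a : Set G)) ((↑(t.biUnion Ψ) : Set G) * (Δ : Set G)) := by
      rw [Set.disjoint_left]
      intro g hg hg'
      obtain ⟨b, hb, d, hd, hbd⟩ := Set.mem_mul.1 hg'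
      rw [Finset.mem_coe, Finset.mem_biUnion] at hb
      obtain ⟨k, hk, hbk⟩ := hb
      have hak : a ≠ k := fun h => ha (h ▸ hk)
      exact Set.disjoint_left.1
        (hdisj a (Finset.mem_insert_self a t) k (Finset.mem_insert_of_mem hk) hak)
        hg (Set.mem_mul.2 ⟨b, hbk, d, hd, hbd⟩)
    obtain ⟨y, hyX, hy1, hy2⟩ := hirr (Ψ a) (t.biUnion Ψ) hd (x a) (hx a) y0 hy0X
    refine ⟨y, hyX, fun i hi g hg => ?_⟩
    rcases Finset.mem_insert.1 hi with rfl | hi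
    · exact hy1 g hg
    · rw [hy2 g (Finset.mem_biUnion.2 ⟨i, hi, hg⟩)]
      exact hy0 i hi g hg

/-- A strongly irreducible `G`-invariant subset `X ⊆ A^G` (with `A` a uniform space and
`A^G` carrying the product uniform structure) has the weak specification property for the
shift action; in particular, the full shift `A^G` has the weak specification property. -/
theorem stronglyIrreducible_weakSpecification {G A : Type*} [Group G] [UniformSpace A]
    (X : Set (G → A)) (hinv : ∀ (g : G), ∀ x ∈ X, shift g x ∈ X)
    (hirr : StronglyIrreducible X) :
    WeakSpecificationOn (𝓤 ↥X)
      (fun g (x : ↥X) => (⟨shift g ↑x, hinv g ↑x x.2⟩ : ↥X)) ∧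
    WeakSpecificationOn (𝓤 (G → A)) shift := by
  classical
  obtain ⟨Δ, hΔ⟩ := hirr
  constructor
  · -- subtype case
    intro U hU
    rw [uniformity_subtype] at hU
    obtain ⟨V, hV, hVsub⟩ := Filter.mem_comap.1 hU
    obtain ⟨F, hF⟩ := pi_entourage hV
    refine ⟨F * Δ⁻¹ * F⁻¹, fun ι _ _ Ω x hdisj => ?_⟩
    obtain ⟨i₀⟩ : Nonempty ι := ‹_›
    have : Fintype ι := Fintype.ofFinite ι
    set Ψ : ι → Finset G := fun i => (Ω i)⁻¹ * F with hΨ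
    have hdisj' : ∀ j ∈ (Finset.univ : Finset ι), ∀ k ∈ (Finset.univ : Finset ι), j ≠ k →
        Disjoint ((Ψ j : Set G)) (((Ψ k) : Set G) * (Δ : Set G)) := by
      intro j _ k _ hjk
      rw [Set.disjoint_left]
      rintro g hg hg'
      obtain ⟨p, hp, d, hd, hpd⟩ := Set.mem_mul.1 hg'
      rw [hΨ] at hg hp
      simp only [Finset.coe_mul, Finset.coe_inv] at hg hp
      obtain ⟨a', ha', f, hf, haf⟩ := Set.mem_mul.1 hg
      obtain ⟨b', hb', f', hf', hbf⟩ := Set.mem_mul.1 hp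
      rw [Set.mem_inv] at ha' hb'
      -- g = a'⁻¹... a' ∈ (Ω j)⁻¹ means a'⁻¹ ∈ Ω j
      -- a' * f = g = p * d = b' * f' * d  ⇒ a'⁻¹ = f * d⁻¹ * f'⁻¹ * b'⁻¹
      refine Set.disjoint_left.1 (hdisj j k hjk) ha' ?_
      have : a'⁻¹ = (f * d⁻¹ * f'⁻¹) * b'⁻¹ := by
        have h1 : a' * f = b' * f' * d := by rw [haf, ← hpd, hbf]
        have : a' = b' * f' * d * f⁻¹ := by
          exact eq_mul_inv_of_mul_eq h1
        rw [this]; group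
      rw [this]
      refine Set.mem_mul.2 ⟨f * d⁻¹ * f'⁻¹, ?_, b'⁻¹, hb', rfl⟩
      push_cast
      exact Set.mul_mem_mul (Set.mul_mem_mul hf (Set.inv_mem_inv.2 hd)) (Set.inv_mem_inv.2 hf')
    obtain ⟨y, hyX, hy⟩ := glue_finset hΔ Finset.univ Ψ (fun i => (x i : G → A))
      (fun i => (x i).2) ⟨_, (x i₀).2⟩ hdisj'
    refine ⟨⟨y, hyX⟩, fun i g hg => ?_⟩
    apply hVsub
    simp only [Set.mem_preimage]
    apply hF
    intro h hh
    show y (g⁻¹ * h) = (x i : G → A) (g⁻¹ * h)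
    exact hy i (Finset.mem_univ i) _
      (Finset.mul_mem_mul (Finset.inv_mem_inv hg) hh)
  · -- full shift case
    intro U hU
    obtain ⟨F, hF⟩ := pi_entourage hU
    refine ⟨F * F⁻¹, fun ι _ _ Ω x hdisj => ?_⟩
    obtain ⟨i₀⟩ : Nonempty ι := ‹_›
    set Ψ : ι → Finset G := fun i => (Ω i)⁻¹ * F with hΨ
    have hdisjΨ : ∀ j k : ι, j ≠ k → Disjoint ((Ψ j : Set G)) ((Ψ k : Set G)) := by
      intro j k hjk
      rw [Set.disjoint_left]
      intro g hg hg'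
      rw [hΨ] at hg hg'
      simp only [Finset.coe_mul, Finset.coe_inv] at hg hg'
      obtain ⟨a', ha', f, hf, haf⟩ := Set.mem_mul.1 hg
      obtain ⟨b', hb', f', hf', hbf⟩ := Set.mem_mul.1 hg'
      rw [Set.mem_inv] at ha' hb'
      refine Set.disjoint_left.1 (hdisj j k hjk) ha' ?_
      have : a'⁻¹ = (f * f'⁻¹) * b'⁻¹ := by
        have h1 : a' * f = b' * f' := by rw [haf, ← hbf]
        have : a' = b' * f' * f⁻¹ := by exact eq_mul_inv_of_mul_eq h1
        rw [this]; group
      rw [this]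
      refine Set.mem_mul.2 ⟨f * f'⁻¹, ?_, b'⁻¹, hb', rfl⟩
      push_cast
      exact Set.mul_mem_mul hf (Set.inv_mem_inv.2 hf')
    set y : G → A := fun h => if hh : ∃ i, h ∈ Ψ i then x hh.choose h else x i₀ h with hy
    have hyval : ∀ i, ∀ h ∈ Ψ i, y h = x i h := by
      intro i h hh
      rw [hy]
      have hex : ∃ j, h ∈ Ψ j := ⟨i, hh⟩
      simp only [dif_pos hex]
      have hj := hex.choose_spec
      by_cases hji : hex.choose = i
      · rw [hji]
      · exact absurd hh (Set.disjoint_left.1 (hdisjΨ hex.choose i hji) hj)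
    refine ⟨y, fun i g hg => ?_⟩
    apply hF
    intro h hh
    show y (g⁻¹ * h) = x i (g⁻¹ * h)
    exact hyval i _ (Finset.mul_mem_mul (Finset.inv_mem_inv hg) hh)
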